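/- In any Lie ring, for all n ≥ 1 and all k with 1 ≤ k ≤ n, the partial identity [Σ_{i=0}^{k} Σ_{j=0}^{⌊i/2⌋} (−1)^{i+1} α_{i−j,j} [[C_{n+i−j}, C_{n+j−1}], C_{n−i}], b] = Σ_{t=0}^{⌊(k+1)/2⌋} (−1)^{k+1} α_{k+1−t,t} [[C_{n+k+1−t}, C_{n−1+t}], C_{n−k}] holds, where Cₙ is the Engel bracket of a by b and α_{i,j} are defined as α_{0,0}=1, α_{i,j} = 2·C(i+j−1,j) + C(i+j−2,j−1) − C(i+j−2,j−2) − 2·C(i+j−1,j−2) otherwise. -/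

import Mathlib

set_option maxRecDepth 10000

/-- The Engel bracket: `engel a b n = [a,_n b] = Cₙ`. -/
def engel {L : Type*} [LieRing L] (a b : L) : ℕ → L
  | 0 => a
  | n + 1 => ⁅engel a b n, b⁆

/-- Binomial coefficient `C(n,k)` on integers, taken to be `0` when `k < 0` or `k > n`. -/
def ch (n k : ℤ) : ℤ := if k < 0 ∨ n < k then 0 else (n.toNat.choose k.toNat : ℤ)

/-- The coefficients `α_{i,j}`. -/
def alpha (i j : ℕ) : ℤ :=
  if i = 0 ∧ j = 0 then 1
  else 2 * ch ((i : ℤ) + j - 1) j + ch ((i : ℤ) + j - 2) ((j : ℤ) - 1)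
    - ch ((i : ℤ) + j - 2) ((j : ℤ) - 2) - 2 * ch ((i : ℤ) + j - 1) ((j : ℤ) - 2)

section ChAlpha

lemma ch_coe (N K : ℕ) : ch N K = (N.choose K : ℤ) := by
  unfold ch
  split_ifs with h
  · rcases h with h | h
    · omega
    · rw [Nat.choose_eq_zero_of_lt (by exact_mod_cast h)]; simp
  · simp

lemma ch_neg (n k : ℤ) (h : k < 0) : ch n k = 0 := by unfold ch; simp [h]

lemma ch_zero (n : ℤ) (h : 0 ≤ n) : ch n 0 = 1 := by
  unfold ch
  rw [if_neg (by omega)]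
  simp

lemma ch_pascal' (n k : ℤ) (h : 0 ≤ n) : ch (n + 1) k = ch n k + ch n (k - 1) := by
  rcases lt_or_ge k 0 with hk | hk
  · rw [ch_neg _ _ hk, ch_neg _ _ hk, ch_neg _ _ (by omega)]; ring
  rcases eq_or_lt_of_le hk with hk0 | hk1
  · rw [← hk0, ch_zero _ (by omega), ch_zero _ h, ch_neg _ _ (by omega)]; ring
  · obtain ⟨N, rfl⟩ := Int.eq_ofNat_of_zero_le h
    obtain ⟨K, hK⟩ := Int.eq_ofNat_of_zero_le (le_of_lt hk1)
    obtain ⟨K', rfl⟩ : ∃ K', K = K' + 1 := ⟨K - 1, by omega⟩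
    subst hK
    rw [show ((N:ℤ) + 1) = ((N+1 : ℕ) : ℤ) by push_cast; ring,
      show ((K'+1:ℕ) : ℤ) - 1 = ((K' : ℕ) : ℤ) by push_cast; ring,
      ch_coe, ch_coe, ch_coe, Nat.choose_succ_succ]
    push_cast; ring

lemma ch_symm (n k : ℤ) (h0 : 0 ≤ k) (h1 : k ≤ n) : ch n k = ch n (n - k) := by
  obtain ⟨K, rfl⟩ := Int.eq_ofNat_of_zero_le h0
  obtain ⟨N, rfl⟩ := Int.eq_ofNat_of_zero_le (le_trans h0 h1)
  rw [show ((N:ℤ) - K) = ((N - K : ℕ) : ℤ) by omega, ch_coe, ch_coe,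
    Nat.choose_symm (by exact_mod_cast h1)]

/-- Auxiliary function expressing `alpha` through its "degree" `s = i + j`. -/
def ff (s j : ℤ) : ℤ :=
  2 * ch (s - 1) j + ch (s - 2) (j - 1) - ch (s - 2) (j - 2) - 2 * ch (s - 1) (j - 2)

lemma alpha_eq_ff (i j : ℕ) (h : ¬(i = 0 ∧ j = 0)) :
    alpha i j = ff ((i : ℤ) + (j : ℤ)) (j : ℤ) := by
  unfold alpha ff
  rw [if_neg h]

lemma ff_rec (m j : ℤ) (hm : 0 ≤ m) : ff (m + 3) j = ff (m + 2) j + ff (m + 2) (j - 1) := by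
  have p1 : ch (m + 2) j = ch (m + 1) j + ch (m + 1) (j - 1) := by
    rw [show (m + 2 : ℤ) = (m + 1) + 1 by ring]; exact ch_pascal' (m + 1) j (by omega)
  have p2 : ch (m + 2) (j - 2) = ch (m + 1) (j - 2) + ch (m + 1) (j - 3) := by
    rw [show (m + 2 : ℤ) = (m + 1) + 1 by ring,
      show (j - 3 : ℤ) = (j - 2) - 1 by ring]
    exact ch_pascal' (m + 1) (j - 2) (by omega)
  have p3 : ch (m + 1) (j - 1) = ch m (j - 1) + ch m (j - 2) := by
    rw [show (j - 2 : ℤ) = (j - 1) - 1 by ring]; exact ch_pascal' m (j - 1) hm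
  have p4 : ch (m + 1) (j - 2) = ch m (j - 2) + ch m (j - 3) := by
    rw [show (j - 3 : ℤ) = (j - 2) - 1 by ring]; exact ch_pascal' m (j - 2) hm
  unfold ff
  rw [show (m + 3 - 1 : ℤ) = m + 2 by ring, show (m + 3 - 2 : ℤ) = m + 1 by ring,
    show (m + 2 - 1 : ℤ) = m + 1 by ring, show (m + 2 - 2 : ℤ) = m by ring,
    show (j - 1 - 1 : ℤ) = j - 2 by ring, show (j - 1 - 2 : ℤ) = j - 3 by ring]
  linarith [p1, p2, p3, p4]

lemma alpha_rec (i j : ℕ) (hi : 1 ≤ i) (hj : 1 ≤ j) (hij : 3 ≤ i + j) :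
    alpha i j = alpha (i - 1) j + alpha i (j - 1) := by
  rw [alpha_eq_ff i j (by omega), alpha_eq_ff (i - 1) j (by omega),
    alpha_eq_ff i (j - 1) (by omega)]
  rw [show ((i - 1 : ℕ) : ℤ) = (i : ℤ) - 1 by omega, show ((j - 1 : ℕ) : ℤ) = (j : ℤ) - 1 by omega]
  have hm : (0 : ℤ) ≤ (i : ℤ) + j - 3 := by push_cast; omega
  rw [show ((i : ℤ) + j) = ((i : ℤ) + j - 3) + 3 by ring,
    show ((i : ℤ) - 1 + j) = ((i : ℤ) + j - 3) + 2 by ring,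
    show ((i : ℤ) + ((j : ℤ) - 1)) = ((i : ℤ) + j - 3) + 2 by ring]
  exact ff_rec _ _ hm

lemma alpha_two (i : ℕ) (hi : 1 ≤ i) : alpha i 0 = 2 := by
  unfold alpha
  rw [if_neg (by omega)]
  rw [show ((0 : ℕ) : ℤ) = (0 : ℤ) by norm_num]
  rw [ch_neg ((i:ℤ) + 0 - 2) (0 - 1) (by norm_num), ch_neg ((i:ℤ) + 0 - 2) (0 - 2) (by norm_num),
    ch_neg ((i:ℤ) + 0 - 1) (0 - 2) (by norm_num), ch_zero ((i:ℤ) + 0 - 1) (by push_cast; omega)]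
  ring

lemma alpha_succ_self (m : ℕ) : alpha m (m + 1) = 0 := by
  rcases Nat.eq_zero_or_pos m with rfl | hm
  · norm_num [alpha, ch]
  unfold alpha
  rw [if_neg (by omega)]
  have e1 : ((m : ℤ) + (m + 1 : ℕ) - 1) = 2 * m := by push_cast; ring
  have e2 : ((m : ℤ) + (m + 1 : ℕ) - 2) = 2 * m - 1 := by push_cast; ring
  rw [e1, e2]
  have s1 : ch (2 * m) ((m + 1 : ℕ) : ℤ) = ch (2 * m) (((m + 1 : ℕ) : ℤ) - 2) := by
    rw [ch_symm (2 * m) ((m + 1 : ℕ) : ℤ) (by positivity) (by push_cast; omega)]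
    congr 1; push_cast; ring
  have s2 : ch (2 * m - 1) (((m + 1 : ℕ) : ℤ) - 1) = ch (2 * m - 1) (((m + 1 : ℕ) : ℤ) - 2) := by
    rw [ch_symm (2 * m - 1) (((m + 1 : ℕ) : ℤ) - 1) (by push_cast; omega) (by push_cast; omega)]
    congr 1; push_cast; ring
  rw [s1, s2]; ring

end ChAlpha

section LieAux

variable {L : Type*} [LieRing L]

lemma sum_lie' {ι : Type*} (s : Finset ι) (f : ι → L) (x : L) :
    ⁅∑ i ∈ s, f i, x⁆ = ∑ i ∈ s, ⁅f i, x⁆ :=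
  map_sum (AddMonoidHom.mk' (⁅·, x⁆) (fun a b => add_lie a b x)) f s

lemma lie_der (u v w : L) : ⁅⁅u, v⁆, w⁆ = ⁅⁅u, w⁆, v⁆ + ⁅u, ⁅v, w⁆⁆ := by
  rw [lie_lie, ← lie_skew v ⁅u, w⁆]
  abel

lemma jac3 (X Y Z : L) : ⁅⁅X, Y⁆, Z⁆ - ⁅⁅Z, Y⁆, X⁆ = ⁅⁅X, Z⁆, Y⁆ := by
  rw [lie_der X Y Z, lie_der Z Y X, ← lie_skew Z X, neg_lie,
    ← lie_skew Y X, lie_neg, leibniz_lie X Y Z, ← lie_skew Z ⁅X, Y⁆, ← lie_skew Y ⁅X, Z⁆]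
  abel

lemma dlie (x y z w : L) : ⁅⁅⁅x, y⁆, z⁆, w⁆ =
    ⁅⁅⁅x, w⁆, y⁆, z⁆ + ⁅⁅x, ⁅y, w⁆⁆, z⁆ + ⁅⁅x, y⁆, ⁅z, w⁆⁆ := by
  rw [lie_der ⁅x, y⁆ z w, lie_der x y w, add_lie]

lemma base_aux (x b : L) :
    ⁅(-1 : ℤ) • ⁅⁅⁅x, b⁆, x⁆, ⁅x, b⁆⁆ + (2 : ℤ) • ⁅⁅⁅⁅x, b⁆, b⁆, x⁆, x⁆, b⁆ =
    (2 : ℤ) • ⁅⁅⁅⁅⁅x, b⁆, b⁆, b⁆, x⁆, x⁆ + (3 : ℤ) • ⁅⁅⁅⁅x, b⁆, b⁆, ⁅x, b⁆⁆, x⁆ := by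
  rw [add_lie, smul_lie, smul_lie, dlie ⁅x,b⁆ x ⁅x,b⁆ b, dlie ⁅⁅x,b⁆,b⁆ x x b,
    lie_self, zero_lie]
  have h := jac3 ⁅⁅x,b⁆,b⁆ x ⁅x,b⁆
  rw [← h]
  simp only [smul_add, smul_sub, neg_smul, one_smul]
  abel

lemma dlie_engel (a b : L) (p q r : ℕ) :
    ⁅⁅⁅engel a b p, engel a b q⁆, engel a b r⁆, b⁆ =
      ⁅⁅engel a b (p + 1), engel a b q⁆, engel a b r⁆ +
      ⁅⁅engel a b p, engel a b (q + 1)⁆, engel a b r⁆ +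
      ⁅⁅engel a b p, engel a b q⁆, engel a b (r + 1)⁆ :=
  dlie _ _ _ _

lemma assemble {V : Type*} [AddCommGroup V] (F G H : ℕ → V) (M : ℕ)
    (hH : ∀ j < M + 1, H (j + 1) = F (j + 1) + G j)
    (hF : F (M + 1) = 0) (hFH : F 0 = H 0) :
    ∑ t ∈ Finset.range (M + 2), H t =
      ∑ t ∈ Finset.range (M + 1), F t + ∑ j ∈ Finset.range (M + 1), G j := by
  rw [Finset.sum_range_succ' H (M + 1)]
  rw [Finset.sum_congr rfl (fun j hj => hH j (Finset.mem_range.mp hj)),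
    Finset.sum_add_distrib]
  have key : (∑ j ∈ Finset.range (M + 1), F (j + 1)) + F 0 =
      (∑ t ∈ Finset.range (M + 1), F t) + F (M + 1) := by
    rw [← Finset.sum_range_succ' F (M + 1), Finset.sum_range_succ]
  rw [hF, add_zero] at key
  rw [hFH] at key
  rw [← key]
  abel

end LieAux

theorem partial_identity {L : Type*} [LieRing L] (a b : L) (n k : ℕ)
    (hk1 : 1 ≤ k) (hk2 : k ≤ n) :
    ⁅∑ i ∈ Finset.range (k + 1), ∑ j ∈ Finset.range (i / 2 + 1),
        ((-1 : ℤ) ^ (i + 1) * alpha (i - j) j) •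
          ⁅⁅engel a b (n + i - j), engel a b (n + j - 1)⁆, engel a b (n - i)⁆, b⁆ =
    ∑ t ∈ Finset.range ((k + 1) / 2 + 1),
        ((-1 : ℤ) ^ (k + 1) * alpha (k + 1 - t) t) •
          ⁅⁅engel a b (n + k + 1 - t), engel a b (n - 1 + t)⁆, engel a b (n - k)⁆ := by
  revert hk2
  induction k, hk1 using Nat.le_induction with
  | base =>
    intro hn
    obtain ⟨m, rfl⟩ : ∃ m, n = m + 1 := ⟨n - 1, by omega⟩
    have h00 : alpha 0 0 = 1 := by norm_num [alpha]
    have h10 : alpha 1 0 = 2 := alpha_two 1 le_rfl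
    have h20 : alpha 2 0 = 2 := alpha_two 2 (by norm_num)
    have h11 : alpha 1 1 = 3 := by norm_num [alpha, ch]
    simp only [Finset.sum_range_succ, Finset.sum_range_zero, Finset.sum_range_one,
      Nat.reduceDiv, Nat.reduceAdd, Nat.reduceSub, Finset.range_zero, Finset.sum_empty,
      zero_add, add_zero, pow_one]
    simp only [show m + 1 + 1 - 0 = m + 2 from by omega, show m + 1 + 1 + 1 - 0 = m + 3 from by omega,
      show m + 1 + 1 + 1 - 1 = m + 2 from by omega, show m + 1 - 0 = m + 1 from by omega,
      show m + 1 - 1 = m from by omega, show m + 1 - 1 + 1 = m + 1 from by omega,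
      show m + 1 + 0 - 0 = m + 1 from by omega, show m + 1 + 0 - 1 = m from by omega,
      show m + 1 - 1 + 0 = m from by omega]
    rw [h00, h10, h20, h11, show ((-1 : ℤ)) ^ 2 = 1 from by norm_num]
    simp only [mul_one, one_mul]
    exact base_aux (engel a b m) b
  | succ k hk ih =>
    intro hn
    rw [Finset.sum_range_succ, add_lie, ih (by omega), sum_lie']
    have hterm : ∀ j ∈ Finset.range ((k + 1) / 2 + 1),
        ⁅((-1 : ℤ) ^ (k + 1 + 1) * alpha (k + 1 - j) j) •
            ⁅⁅engel a b (n + (k + 1) - j), engel a b (n + j - 1)⁆, engel a b (n - (k + 1))⁆, b⁆ =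
          (((-1 : ℤ) ^ (k + 1 + 1) * alpha (k + 1 - j) j) •
              ⁅⁅engel a b (n + k + 2 - j), engel a b (n - 1 + j)⁆, engel a b (n - k - 1)⁆ +
            ((-1 : ℤ) ^ (k + 1 + 1) * alpha (k + 1 - j) j) •
              ⁅⁅engel a b (n + k + 1 - j), engel a b (n + j)⁆, engel a b (n - k - 1)⁆) +
          ((-1 : ℤ) ^ (k + 1 + 1) * alpha (k + 1 - j) j) •
              ⁅⁅engel a b (n + k + 1 - j), engel a b (n - 1 + j)⁆, engel a b (n - k)⁆ := by
      intro j hj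
      rw [Finset.mem_range] at hj
      rw [smul_lie, dlie_engel]
      rw [show n + (k + 1) - j + 1 = n + k + 2 - j from by omega,
        show n + j - 1 + 1 = n + j from by omega,
        show n - (k + 1) + 1 = n - k from by omega,
        show n + (k + 1) - j = n + k + 1 - j from by omega,
        show n + j - 1 = n - 1 + j from by omega,
        show n - (k + 1) = n - k - 1 from by omega,
        smul_add, smul_add]
    rw [Finset.sum_congr rfl hterm, Finset.sum_add_distrib, Finset.sum_add_distrib]
    have hD : (∑ j ∈ Finset.range ((k + 1) / 2 + 1), ((-1 : ℤ) ^ (k + 1 + 1) * alpha (k + 1 - j) j) •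
          ⁅⁅engel a b (n + k + 1 - j), engel a b (n - 1 + j)⁆, engel a b (n - k)⁆) =
        -∑ t ∈ Finset.range ((k + 1) / 2 + 1), ((-1 : ℤ) ^ (k + 1) * alpha (k + 1 - t) t) •
          ⁅⁅engel a b (n + k + 1 - t), engel a b (n - 1 + t)⁆, engel a b (n - k)⁆ := by
      rw [← Finset.sum_neg_distrib]
      refine Finset.sum_congr rfl fun j _ => ?_
      rw [← neg_smul]
      congr 1
      ring
    rw [hD]
    have hsub : (∑ t ∈ Finset.range ((k + 1 + 1) / 2 + 1),
          ((-1 : ℤ) ^ (k + 1 + 1) * alpha (k + 1 + 1 - t) t) •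
            ⁅⁅engel a b (n + (k + 1) + 1 - t), engel a b (n - 1 + t)⁆, engel a b (n - (k + 1))⁆) =
        ∑ t ∈ Finset.range ((k + 1) / 2 + 2),
          ((-1 : ℤ) ^ (k + 1 + 1) * alpha (k + 1 + 1 - t) t) •
            ⁅⁅engel a b (n + (k + 1) + 1 - t), engel a b (n - 1 + t)⁆, engel a b (n - (k + 1))⁆ := by
      apply Finset.sum_subset
      · intro x hx
        rw [Finset.mem_range] at *
        omega
      · intro t ht hnt
        rw [Finset.mem_range] at ht hnt
        obtain ⟨m2, hm2⟩ : ∃ m2, k = 2 * m2 + 1 := ⟨k / 2, by omega⟩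
        rw [show k + 1 + 1 - t = m2 + 1 from by omega, show t = m2 + 1 + 1 from by omega,
          alpha_succ_self (m2 + 1), mul_zero, zero_smul]
    rw [hsub]
    rw [assemble
      (fun t => ((-1 : ℤ) ^ (k + 1 + 1) * alpha (k + 1 - t) t) •
        ⁅⁅engel a b (n + k + 2 - t), engel a b (n - 1 + t)⁆, engel a b (n - k - 1)⁆)
      (fun j => ((-1 : ℤ) ^ (k + 1 + 1) * alpha (k + 1 - j) j) •
        ⁅⁅engel a b (n + k + 1 - j), engel a b (n + j)⁆, engel a b (n - k - 1)⁆)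
      (fun t => ((-1 : ℤ) ^ (k + 1 + 1) * alpha (k + 1 + 1 - t) t) •
        ⁅⁅engel a b (n + (k + 1) + 1 - t), engel a b (n - 1 + t)⁆, engel a b (n - (k + 1))⁆)
      ((k + 1) / 2) ?_ ?_ ?_]
    · abel
    · -- hH
      intro j hj
      rw [show k + 1 + 1 - (j + 1) = k + 1 - j from by omega,
        show n + (k + 1) + 1 - (j + 1) = n + k + 1 - j from by omega,
        show n - 1 + (j + 1) = n + j from by omega,
        show n - (k + 1) = n - k - 1 from by omega,
        show n + k + 2 - (j + 1) = n + k + 1 - j from by omega,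
        alpha_rec (k + 1 - j) (j + 1) (by omega) (by omega) (by omega),
        show k + 1 - j - 1 = k + 1 - (j + 1) from by omega,
        Nat.add_sub_cancel, mul_add, add_smul]
    · -- hF
      rcases Nat.even_or_odd k with ⟨m2, rfl⟩ | ⟨m2, rfl⟩
      · rw [show m2 + m2 + 1 - ((m2 + m2 + 1) / 2 + 1) = m2 from by omega,
          show (m2 + m2 + 1) / 2 + 1 = m2 + 1 from by omega,
          alpha_succ_self, mul_zero, zero_smul]
      · rw [show n + (2 * m2 + 1) + 2 - ((2 * m2 + 1 + 1) / 2 + 1) = n + m2 + 1 from by omega,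
          show n - 1 + ((2 * m2 + 1 + 1) / 2 + 1) = n + m2 + 1 from by omega,
          lie_self, zero_lie, smul_zero]
    · -- hFH
      rw [show k + 1 - 0 = k + 1 from by omega, show k + 1 + 1 - 0 = k + 2 from by omega,
        show n + k + 2 - 0 = n + k + 2 from by omega,
        show n + (k + 1) + 1 - 0 = n + k + 2 from by omega,
        show n - (k + 1) = n - k - 1 from by omega,
        alpha_two (k + 1) (by omega), alpha_two (k + 2) (by omega)]
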